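/- Fix an integer k ≥ 3 and N ≥ 1. For 0 ≤ i ≤ 2N and μ ∈ W_{k−1}, let T(μ,i) denote the number of sequences (v_i = μ, v_{i+1}, …, v_{2N} = δ) of points of W_{k−1} with v_t − v_{t−1} ∈ {−e_h : 0 ≤ h ≤ k−1} for odd t and v_t − v_{t−1} ∈ {+e_h : 0 ≤ h ≤ k−1} for even t, for all i+1 ≤ t ≤ 2N. Then for every P_{W_{k−1}}-walk (λ^0 = δ, λ^1, …, λ^{2N} = δ) of length 2N: T(λ^i, i) > 0 for all 0 ≤ i ≤ 2N, and the product over i = 0,…,2N−1 of the rational numbers T(λ^{i+1}, i+1)/T(λ^i, i) equals 1/ω^δ_{k,2N}. In particular, the Markov process with these transition probabilities generates each P_{W_{k−1}}-walk of length 2N from δ to δ (and hence each k-noncrossing partition of [N]) with uniform probability 1/ω^δ_{k,2N}. -/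

import Mathlib

open Finset

/-- Lattice points in `ℤ^(k-1)`; coordinate `i : Fin (k-1)` represents `ν_{i+1}`. -/
abbrev Pt (k : ℕ) := Fin (k - 1) → ℤ

/-- The starting point `δ = (k-2, k-3, …, 1, 0)`. -/
def delta (k : ℕ) : Pt k := fun i => (k : ℤ) - 2 - (i : ℤ)

/-- Membership in `Q_{k-1}`: all coordinates nonnegative. -/
def inQ {k : ℕ} (v : Pt k) : Prop := ∀ i, 0 ≤ v i

/-- Membership in `W_{k-1}`: `ν_1 > ν_2 > ⋯ > ν_{k-1} ≥ 0`. -/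
def inW {k : ℕ} (v : Pt k) : Prop := StrictAnti v ∧ ∀ i, 0 ≤ v i

/-- `eVec k i` is `e_i`: `e_0 = 0` and for `1 ≤ i ≤ k-1`, `e_i` is the `i`-th
standard basis vector of `ℤ^(k-1)`. -/
def eVec (k : ℕ) (i : Fin k) : Pt k := fun j => if (j : ℕ) + 1 = (i : ℕ) then 1 else 0

/-- The vector `e_1`. -/
def eOne (k : ℕ) : Pt k := fun j => if (j : ℕ) = 0 then 1 else 0

/-- A step in `{+e_i : 0 ≤ i ≤ k-1}`. -/
def plusStep {k : ℕ} (d : Pt k) : Prop := ∃ i : Fin k, d = eVec k i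

/-- A step in `{-e_i : 0 ≤ i ≤ k-1}`. -/
def minusStep {k : ℕ} (d : Pt k) : Prop := ∃ i : Fin k, d = -eVec k i

/-- A `𝒫_D`-walk of length `ℓ`: starts at `δ`, stays in `D`, odd steps are `-e_i`,
even steps are `+e_i`. -/
def IsPWalk {k : ℕ} (D : Pt k → Prop) (ℓ : ℕ) (v : Fin (ℓ + 1) → Pt k) : Prop :=
  v ⟨0, Nat.succ_pos ℓ⟩ = delta k ∧ (∀ t, D (v t)) ∧
    ∀ t : ℕ, ∀ h : t + 1 < ℓ + 1,
      (Odd (t + 1) → minusStep (v ⟨t + 1, h⟩ - v ⟨t, by omega⟩)) ∧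
      (Even (t + 1) → plusStep (v ⟨t + 1, h⟩ - v ⟨t, by omega⟩))

/-- A `ℬ_D`-walk of length `ℓ`: starts at `δ`, stays in `D`, odd steps are `+e_i`,
even steps are `-e_i`. -/
def IsBWalk {k : ℕ} (D : Pt k → Prop) (ℓ : ℕ) (v : Fin (ℓ + 1) → Pt k) : Prop :=
  v ⟨0, Nat.succ_pos ℓ⟩ = delta k ∧ (∀ t, D (v t)) ∧
    ∀ t : ℕ, ∀ h : t + 1 < ℓ + 1,
      (Odd (t + 1) → plusStep (v ⟨t + 1, h⟩ - v ⟨t, by omega⟩)) ∧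
      (Even (t + 1) → minusStep (v ⟨t + 1, h⟩ - v ⟨t, by omega⟩))

/-- A walk is loop-free if no odd/even step pair `(+e_1, -e_1)` occurs. -/
def LoopFree {k ℓ : ℕ} (v : Fin (ℓ + 1) → Pt k) : Prop :=
  ∀ q : ℕ, 1 ≤ q → ∀ h : 2 * q < ℓ + 1,
    ¬ (v ⟨2 * q - 1, by omega⟩ - v ⟨2 * q - 2, by omega⟩ = eOne k ∧
       v ⟨2 * q, h⟩ - v ⟨2 * q - 1, by omega⟩ = -eOne k)

/-- `a^ν_{k,ℓ}`: the number of `𝒫_{Q_{k-1}}`-walks of length `ℓ` ending at `ν`. -/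
noncomputable def aCount (k ℓ : ℕ) (ν : Pt k) : ℕ :=
  Nat.card {v : Fin (ℓ + 1) → Pt k //
    IsPWalk (inQ (k := k)) ℓ v ∧ v (Fin.last ℓ) = ν}

/-- `ω^ν_{k,ℓ}`: the number of `𝒫_{W_{k-1}}`-walks of length `ℓ` ending at `ν`. -/
noncomputable def omegaCount (k ℓ : ℕ) (ν : Pt k) : ℕ :=
  Nat.card {v : Fin (ℓ + 1) → Pt k //
    IsPWalk (inW (k := k)) ℓ v ∧ v (Fin.last ℓ) = ν}

/-- `σ^ν_{k,ℓ}`: the number of `ℬ_{W_{k-1}}`-walks of length `ℓ` ending at `ν`. -/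
noncomputable def sigmaCount (k ℓ : ℕ) (ν : Pt k) : ℕ :=
  Nat.card {v : Fin (ℓ + 1) → Pt k //
    IsBWalk (inW (k := k)) ℓ v ∧ v (Fin.last ℓ) = ν}

/-- `σ^{ν;*}_{k,ℓ}`: the number of loop-free `ℬ_{W_{k-1}}`-walks of length `ℓ`
ending at `ν`. -/
noncomputable def sigmaStarCount (k ℓ : ℕ) (ν : Pt k) : ℕ :=
  Nat.card {v : Fin (ℓ + 1) → Pt k //
    IsBWalk (inW (k := k)) ℓ v ∧ LoopFree v ∧ v (Fin.last ℓ) = ν}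

/-- `(a,b)` is an arc of the standard representation of the partition `P`:
`a < b`, `a` and `b` lie in a common block `B`, and no element of `B` lies
strictly between them. -/
def IsArc {N : ℕ} (P : Finpartition (Finset.univ : Finset (Fin N))) (a b : Fin N) : Prop :=
  a < b ∧ ∃ B ∈ P.parts, a ∈ B ∧ b ∈ B ∧ ∀ c ∈ B, ¬(a < c ∧ c < b)

/-- The partition `P` has a `k`-crossing: arcs `(i₁,j₁),…,(i_k,j_k)` with
`i₁ < ⋯ < i_k < j₁ < ⋯ < j_k`. -/
def PartitionHasKCrossing {N : ℕ} (k : ℕ)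
    (P : Finpartition (Finset.univ : Finset (Fin N))) : Prop :=
  ∃ ii jj : Fin k → Fin N, (∀ m, IsArc P (ii m) (jj m)) ∧
    StrictMono ii ∧ StrictMono jj ∧ ∀ m m', ii m < jj m'

/-- The partition `P` is `2`-regular: distinct elements of a common block differ
by at least `2`. -/
def TwoRegular {N : ℕ} (P : Finpartition (Finset.univ : Finset (Fin N))) : Prop :=
  ∀ B ∈ P.parts, ∀ x ∈ B, ∀ y ∈ B, x ≠ y → 2 ≤ |((x : ℕ) : ℤ) - ((y : ℕ) : ℤ)|

/-- A braid over `[N]`, given by its arc set: arcs `(i,j)` with `i ≤ j` (loops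
allowed), each vertex is the smaller endpoint of at most one arc and the larger
endpoint of at most one arc. -/
def IsBraid {N : ℕ} (A : Finset (Fin N × Fin N)) : Prop :=
  (∀ p ∈ A, p.1 ≤ p.2) ∧ (∀ p ∈ A, ∀ q ∈ A, p.1 = q.1 → p = q) ∧
    (∀ p ∈ A, ∀ q ∈ A, p.2 = q.2 → p = q)

/-- The braid with arc set `A` has a `k`-crossing: arcs `(i₁,j₁),…,(i_k,j_k)`
with `i₁ < ⋯ < i_k ≤ j₁ < ⋯ < j_k`. -/
def BraidHasKCrossing {N : ℕ} (k : ℕ) (A : Finset (Fin N × Fin N)) : Prop :=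
  ∃ ii jj : Fin k → Fin N, (∀ m, (ii m, jj m) ∈ A) ∧
    StrictMono ii ∧ StrictMono jj ∧ ∀ m m', ii m ≤ jj m'

/-- A braid is loop-free if it has no arc `(i,i)`. -/
def BraidLoopFree {N : ℕ} (A : Finset (Fin N × Fin N)) : Prop :=
  ∀ p ∈ A, p.1 ≠ p.2

/-- `T(μ, i)`: the number of sequences `(v_i = μ, v_{i+1}, …, v_{2N} = δ)` of points
of `W_{k-1}` whose step at each absolute time `t` (for `i+1 ≤ t ≤ 2N`) is a
`-e_h`-step if `t` is odd and a `+e_h`-step if `t` is even. -/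
noncomputable def tailCount (k N i : ℕ) (μ : Pt k) : ℕ :=
  Nat.card {v : Fin (2 * N - i + 1) → Pt k //
    v ⟨0, Nat.succ_pos _⟩ = μ ∧ v (Fin.last (2 * N - i)) = delta k ∧
    (∀ t, inW (v t)) ∧
    ∀ t : ℕ, ∀ h : t + 1 < 2 * N - i + 1,
      (Odd (i + t + 1) → minusStep (v ⟨t + 1, h⟩ - v ⟨t, by omega⟩)) ∧
      (Even (i + t + 1) → plusStep (v ⟨t + 1, h⟩ - v ⟨t, by omega⟩))}

section Aux

lemma inW_delta (k : ℕ) : inW (delta k) := by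
  constructor
  · intro a b hab
    simp only [delta]
    have : (a : ℕ) < (b : ℕ) := hab
    omega
  · intro i
    have := i.isLt
    simp only [delta]
    omega

lemma finite_aux {k m : ℕ} (μ : Pt k) (C : (Fin (m + 1) → Pt k) → Prop)
    (h0 : ∀ v, C v → v ⟨0, Nat.succ_pos m⟩ = μ)
    (hstep : ∀ v, C v → ∀ t : Fin m, ∃ i : Fin k,
      v t.succ - v t.castSucc = eVec k i ∨ v t.succ - v t.castSucc = -eVec k i) :
    Finite {v // C v} := by
  classical
  have hS : Finite {d : Pt k // ∃ i : Fin k, d = eVec k i ∨ d = -eVec k i} := by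
    apply Finite.of_surjective
      (fun p : Fin k × Bool =>
        (⟨if p.2 then eVec k p.1 else -eVec k p.1, p.1, by cases p.2 <;> simp⟩ :
          {d : Pt k // ∃ i : Fin k, d = eVec k i ∨ d = -eVec k i}))
    rintro ⟨d, i, hd | hd⟩
    · exact ⟨(i, true), by simp [hd]⟩
    · exact ⟨(i, false), by simp [hd]⟩
  apply Finite.of_injective (fun v : {v // C v} => fun t : Fin m =>
    (⟨v.1 t.succ - v.1 t.castSucc, hstep v.1 v.2 t⟩ :
      {d : Pt k // ∃ i : Fin k, d = eVec k i ∨ d = -eVec k i}))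
  rintro ⟨v, hv⟩ ⟨w, hw⟩ hvw
  have hdiff : ∀ t : Fin m, v t.succ - v t.castSucc = w t.succ - w t.castSucc := by
    intro t
    exact congrArg Subtype.val (congrFun hvw t)
  have key : ∀ t, ∀ h : t < m + 1, v ⟨t, h⟩ = w ⟨t, h⟩ := by
    intro t
    induction t with
    | zero =>
      intro h
      rw [h0 v hv, h0 w hw]
    | succ t ih =>
      intro h
      have ht : t < m + 1 := by omega
      have htm : t < m := by omega
      have hd : v ⟨t + 1, h⟩ - v ⟨t, ht⟩ = w ⟨t + 1, h⟩ - w ⟨t, ht⟩ := hdiff ⟨t, htm⟩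
      calc v ⟨t + 1, h⟩ = (v ⟨t + 1, h⟩ - v ⟨t, ht⟩) + v ⟨t, ht⟩ := by abel
      _ = (w ⟨t + 1, h⟩ - w ⟨t, ht⟩) + w ⟨t, ht⟩ := by rw [hd, ih ht]
      _ = w ⟨t + 1, h⟩ := by abel
  apply Subtype.ext
  funext t
  exact key t.1 t.2

lemma tail_finite (k N i : ℕ) (μ : Pt k) :
    Finite {v : Fin (2 * N - i + 1) → Pt k //
      v ⟨0, Nat.succ_pos _⟩ = μ ∧ v (Fin.last (2 * N - i)) = delta k ∧
      (∀ t, inW (v t)) ∧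
      ∀ t : ℕ, ∀ h : t + 1 < 2 * N - i + 1,
        (Odd (i + t + 1) → minusStep (v ⟨t + 1, h⟩ - v ⟨t, by omega⟩)) ∧
        (Even (i + t + 1) → plusStep (v ⟨t + 1, h⟩ - v ⟨t, by omega⟩))} := by
  apply finite_aux μ
  · exact fun v hv => hv.1
  · rintro v ⟨-, -, -, hs⟩ t
    have ht : (t : ℕ) + 1 < 2 * N - i + 1 := by have := t.isLt; omega
    obtain ⟨hm, hp⟩ := hs t ht
    rcases Nat.even_or_odd (i + t + 1) with he | ho
    · obtain ⟨j, hj⟩ := hp he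
      exact ⟨j, Or.inl hj⟩
    · obtain ⟨j, hj⟩ := hm ho
      exact ⟨j, Or.inr hj⟩

lemma card_pos_aux {α : Type*} (h1 : Finite α) (h2 : Nonempty α) : 0 < Nat.card α :=
  Nat.card_pos

lemma tail_pos (k N : ℕ) (lam : Fin (2 * N + 1) → Pt k)
    (hlam : IsPWalk (inW (k := k)) (2 * N) lam)
    (hend : lam (Fin.last (2 * N)) = delta k) (i : Fin (2 * N + 1)) :
    0 < tailCount k N (i : ℕ) (lam i) := by
  obtain ⟨h0, hW, hstep⟩ := hlam
  rw [tailCount]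
  apply card_pos_aux (tail_finite k N i (lam i))
  refine ⟨⟨fun t => lam ⟨(i : ℕ) + (t : ℕ), by have := i.isLt; have := t.isLt; omega⟩,
    ?_, ?_, fun t => hW _, ?_⟩⟩
  · exact congrArg lam (Fin.ext (by simp))
  · refine (congrArg lam (Fin.ext ?_)).trans hend
    simp only [Fin.last]
    have := i.isLt; omega
  · intro t ht
    exact hstep ((i : ℕ) + t) (by have := i.isLt; omega)

lemma tail_last (k N : ℕ) : tailCount k N (2 * N) (delta k) = 1 := by
  rw [tailCount, Nat.card_eq_one_iff_unique]
  constructor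
  · constructor
    rintro ⟨v, hv0, -⟩ ⟨w, hw0, -⟩
    apply Subtype.ext
    funext t
    have h1 : t = ⟨0, Nat.succ_pos _⟩ := Fin.ext (by have := t.isLt; omega)
    rw [h1]
    show v _ = w _
    rw [hv0, hw0]
  · refine ⟨⟨fun _ => delta k, rfl, rfl, fun _ => inW_delta k, ?_⟩⟩
    intro t ht
    exact absurd ht (by omega)

lemma tail_zero (k N : ℕ) :
    tailCount k N 0 (delta k) = omegaCount k (2 * N) (delta k) := by
  rw [tailCount, omegaCount]
  apply Nat.card_congr
  apply Equiv.subtypeEquivRight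
  intro v
  constructor
  · rintro ⟨h0, hl, hW, hs⟩
    exact ⟨⟨h0, hW, fun t ht => by have := hs t ht; simpa [Nat.zero_add] using this⟩, hl⟩
  · rintro ⟨⟨h0, hW, hs⟩, hl⟩
    exact ⟨h0, hl, hW, fun t ht => by have := hs t ht; simpa [Nat.zero_add] using this⟩

lemma telescope (f : ℕ → ℚ) :
    ∀ n : ℕ, (∀ i, i ≤ n → f i ≠ 0) →
      ∏ i ∈ Finset.range n, (f (i + 1) / f i) = f n / f 0
  | 0, h => by simp [div_self (h 0 le_rfl)]
  | n + 1, h => by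
    rw [Finset.prod_range_succ, telescope f n (fun i hi => h i (by omega))]
    have hn : f n ≠ 0 := h n (by omega)
    have h0 : f 0 ≠ 0 := h 0 (by omega)
    field_simp

end Aux

/-- along any `𝒫_{W_{k-1}}`-walk `(λ^0 = δ, …, λ^{2N} = δ)`, the tail
counts `T(λ^i, i)` are positive and the product of the transition probabilities
`T(λ^{i+1}, i+1)/T(λ^i, i)` equals `1/ω^δ_{k,2N}`: the Markov process generates
each such walk (hence each `k`-noncrossing partition of `[N]`) uniformly. -/
theorem uniform_generation (k N : ℕ) (hk : 3 ≤ k) (hN : 1 ≤ N)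
    (lam : Fin (2 * N + 1) → Pt k)
    (hlam : IsPWalk (inW (k := k)) (2 * N) lam)
    (hend : lam (Fin.last (2 * N)) = delta k) :
    (∀ i : Fin (2 * N + 1), 0 < tailCount k N (i : ℕ) (lam i)) ∧
    ∏ i : Fin (2 * N),
        ((tailCount k N ((i : ℕ) + 1) (lam i.succ) : ℚ) /
          (tailCount k N (i : ℕ) (lam i.castSucc) : ℚ)) =
      1 / (omegaCount k (2 * N) (delta k) : ℚ) := by
  have hpos : ∀ i : Fin (2 * N + 1), 0 < tailCount k N (i : ℕ) (lam i) :=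
    fun i => tail_pos k N lam hlam hend i
  refine ⟨hpos, ?_⟩
  classical
  set F : ℕ → ℚ := fun t =>
    if h : t < 2 * N + 1 then (tailCount k N t (lam ⟨t, h⟩) : ℚ) else 1 with hF
  have hFne : ∀ t, t ≤ 2 * N → F t ≠ 0 := by
    intro t ht
    have h : t < 2 * N + 1 := by omega
    rw [hF]
    simp only [dif_pos h]
    exact_mod_cast (hpos ⟨t, h⟩).ne'
  have hprod : ∏ i : Fin (2 * N),
      ((tailCount k N ((i : ℕ) + 1) (lam i.succ) : ℚ) /
        (tailCount k N (i : ℕ) (lam i.castSucc) : ℚ)) =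
      ∏ i ∈ Finset.range (2 * N), (F (i + 1) / F i) := by
    rw [← Fin.prod_univ_eq_prod_range (fun t => F (t + 1) / F t) (2 * N)]
    apply Finset.prod_congr rfl
    intro i _
    have h1 : (i : ℕ) + 1 < 2 * N + 1 := by have := i.isLt; omega
    have h2 : (i : ℕ) < 2 * N + 1 := by have := i.isLt; omega
    rw [hF]
    simp only [dif_pos h1, dif_pos h2]
    rfl
  rw [hprod, telescope F (2 * N) hFne]
  have hF0 : F 0 = (omegaCount k (2 * N) (delta k) : ℚ) := by
    have h : (0 : ℕ) < 2 * N + 1 := Nat.succ_pos _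
    rw [hF]
    simp only [dif_pos h]
    rw [show lam ⟨0, h⟩ = delta k from hlam.1, tail_zero]
  have hFn : F (2 * N) = 1 := by
    have h : 2 * N < 2 * N + 1 := by omega
    rw [hF]
    simp only [dif_pos h]
    rw [show lam ⟨2 * N, h⟩ = delta k from hend, tail_last]
    norm_num
  rw [hF0, hFn]
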